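/- arXiv:1206.1425 — 3 statements merged into one kernel-verified Lean document; each statement's English description precedes it below -/
import Mathlib

section
/- Grouping effect (Theorem 1, general form used in its proof): Let n, p ≥ 1, let F : ℝ^n → ℝ be an arbitrary function, let φ : ℝ → ℝ be strictly convex, and let X be an n×p real matrix whose l-th and k-th columns are equal for some indices l ≠ k. If β̂ ∈ ℝ^p is a global minimizer over ℝ^p of the objective G(β) = F(X β) + Σ_{j=1}^p φ(β_j), then β̂_l = β̂_k. -/
/-- Grouping effect (general form): if the `l`-th and `k`-th columns of `X` coincide
and the penalty `φ` is strictly convex, then any global minimizer of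
`β ↦ F (X β) + ∑ j, φ (β j)` satisfies `β̂ l = β̂ k`. -/
theorem grouping_effect_general
    (n p : ℕ) (hn : 1 ≤ n) (hp : 1 ≤ p)
    (F : (Fin n → ℝ) → ℝ) (φ : ℝ → ℝ)
    (hφ : ∀ a b : ℝ, a ≠ b → ∀ t : ℝ, 0 < t → t < 1 →
      φ (t * a + (1 - t) * b) < t * φ a + (1 - t) * φ b)
    (X : Matrix (Fin n) (Fin p) ℝ) (l k : Fin p) (hlk : l ≠ k)
    (hcol : ∀ i : Fin n, X i l = X i k)
    (βhat : Fin p → ℝ)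
    (hmin : ∀ β : Fin p → ℝ,
      F (X.mulVec βhat) + ∑ j, φ (βhat j) ≤ F (X.mulVec β) + ∑ j, φ (β j)) :
    βhat l = βhat k := by
  by_contra hne
  set a := βhat l with ha
  set b := βhat k with hb
  set m := (a + b) / 2 with hm
  set β' : Fin p → ℝ := fun j => if j = l ∨ j = k then m else βhat j with hβ'
  have hβ'l : β' l = m := by simp [hβ']
  have hβ'k : β' k = m := by simp [hβ']
  have h1 : ∀ (f : Fin p → ℝ),
      ∑ j, f j = f l + (f k + ∑ j ∈ (Finset.univ.erase l).erase k, f j) := by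
    intro f
    rw [Finset.add_sum_erase _ f (by simp [hlk.symm] : k ∈ Finset.univ.erase l),
        Finset.add_sum_erase _ f (Finset.mem_univ l)]
  have hrest : ∀ (g : ℝ → ℝ), ∀ j ∈ (Finset.univ.erase l).erase k,
      g (β' j) = g (βhat j) := by
    intro g j hj
    simp only [Finset.mem_erase] at hj
    simp [hβ', hj.1, hj.2.1]
  have hmul : X.mulVec β' = X.mulVec βhat := by
    funext i
    simp only [Matrix.mulVec, dotProduct]
    rw [h1 (fun j => X i j * β' j), h1 (fun j => X i j * βhat j)]
    rw [Finset.sum_congr rfl (fun j hj => by rw [hrest (fun x => X i j * x) j hj])]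
    have hkey : X i l * β' l + X i k * β' k = X i l * βhat l + X i k * βhat k := by
      rw [hβ'l, hβ'k, hcol i, ← ha, ← hb, hm]; ring
    linarith
  have hconv : φ m < (1/2 : ℝ) * φ a + (1/2 : ℝ) * φ b := by
    have := hφ a b hne (1/2) (by norm_num) (by norm_num)
    rw [hm]
    convert this using 2 <;> ring
  have hsum : ∑ j, φ (β' j) < ∑ j, φ (βhat j) := by
    rw [h1 (fun j => φ (β' j)), h1 (fun j => φ (βhat j))]
    rw [Finset.sum_congr rfl (fun j hj => hrest φ j hj)]
    rw [hβ'l, hβ'k, ← ha, ← hb]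
    linarith
  have := hmin β'
  rw [hmul] at this
  linarith
end

section
/- Grouping effect for the elastic net penalty: Let n, p ≥ 1, let F : ℝ^n → ℝ be an arbitrary function, let λ1 ≥ 0 and λ2 > 0, and let X be an n×p real matrix whose l-th and k-th columns are equal for some indices l ≠ k. If β̂ ∈ ℝ^p is a global minimizer over ℝ^p of G(β) = F(X β) + Σ_{j=1}^p ( λ1·|β_j| + λ2·β_j² ), then β̂_l = β̂_k. -/
/-- Grouping effect for the elastic net penalty. -/
theorem grouping_effect_elastic_net
    (n p : ℕ) (hn : 1 ≤ n) (hp : 1 ≤ p)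
    (F : (Fin n → ℝ) → ℝ) (lam1 lam2 : ℝ) (hlam1 : 0 ≤ lam1) (hlam2 : 0 < lam2)
    (X : Matrix (Fin n) (Fin p) ℝ) (l k : Fin p) (hlk : l ≠ k)
    (hcol : ∀ i : Fin n, X i l = X i k)
    (βhat : Fin p → ℝ)
    (hmin : ∀ β : Fin p → ℝ,
      F (X.mulVec βhat) + ∑ j, (lam1 * |βhat j| + lam2 * (βhat j) ^ 2)
        ≤ F (X.mulVec β) + ∑ j, (lam1 * |β j| + lam2 * (β j) ^ 2)) :
    βhat l = βhat k := by
  by_contra hne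
  set a := βhat l with ha
  set b := βhat k with hb
  set m : ℝ := (a + b) / 2 with hm
  set β : Fin p → ℝ := fun j => if j = l ∨ j = k then m else βhat j with hβ
  have hβl : β l = m := by simp [hβ]
  have hβk : β k = m := by simp [hβ]
  have hβo : ∀ j, j ≠ l → j ≠ k → β j = βhat j := by
    intro j h1 h2; simp [hβ, h1, h2]
  -- X β = X βhat
  have hXv : X.mulVec β = X.mulVec βhat := by
    funext i
    have hdiff : ∑ j, X i j * (β j - βhat j) = 0 := by
      have := Fintype.sum_eq_add l k hlk (f := fun j => X i j * (β j - βhat j))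
        (by intro c hc; rw [hβo c hc.1 hc.2]; ring)
      rw [this]
      simp only [hβl, hβk, hcol i]
      ring
    have : ∑ j, X i j * β j = ∑ j, X i j * βhat j := by
      have h2 : ∑ j, X i j * (β j - βhat j)
          = ∑ j, X i j * β j - ∑ j, X i j * βhat j := by
        rw [← Finset.sum_sub_distrib]; congr 1; funext j; ring
      linarith [h2 ▸ hdiff]
    simpa [Matrix.mulVec, dotProduct] using this
  -- penalty strictly decreases
  have key := hmin β
  rw [hXv] at key
  have hsum : ∑ j, (lam1 * |β j| + lam2 * (β j) ^ 2)
      < ∑ j, (lam1 * |βhat j| + lam2 * (βhat j) ^ 2) := by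
    have hs : ∑ j, ((lam1 * |β j| + lam2 * (β j) ^ 2)
        - (lam1 * |βhat j| + lam2 * (βhat j) ^ 2))
        = (lam1 * |m| + lam2 * m ^ 2 - (lam1 * |a| + lam2 * a ^ 2))
          + (lam1 * |m| + lam2 * m ^ 2 - (lam1 * |b| + lam2 * b ^ 2)) := by
      have := Fintype.sum_eq_add l k hlk
        (f := fun j => (lam1 * |β j| + lam2 * (β j) ^ 2)
          - (lam1 * |βhat j| + lam2 * (βhat j) ^ 2))
        (by intro c hc; rw [hβo c hc.1 hc.2]; ring)
      rw [this]
      simp only [hβl, hβk, ← ha, ← hb]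
    have habs : 2 * |m| ≤ |a| + |b| := by
      have := abs_add_le a b
      have hm2 : |m| = |a + b| / 2 := by rw [hm, abs_div]; norm_num
      rw [hm2]; linarith
    have hsq : 2 * m ^ 2 < a ^ 2 + b ^ 2 := by
      have hab : a - b ≠ 0 := sub_ne_zero.mpr hne
      have h0 : (a - b) ^ 2 > 0 := by positivity
      have : 2 * m ^ 2 = (a ^ 2 + b ^ 2) - (a - b) ^ 2 / 2 := by rw [hm]; ring
      linarith
    have hneg : (lam1 * |m| + lam2 * m ^ 2 - (lam1 * |a| + lam2 * a ^ 2))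
          + (lam1 * |m| + lam2 * m ^ 2 - (lam1 * |b| + lam2 * b ^ 2)) < 0 := by
      nlinarith [hlam1, hlam2, habs, hsq]
    have h2 : ∑ j, ((lam1 * |β j| + lam2 * (β j) ^ 2)
        - (lam1 * |βhat j| + lam2 * (βhat j) ^ 2))
        = ∑ j, (lam1 * |β j| + lam2 * (β j) ^ 2)
          - ∑ j, (lam1 * |βhat j| + lam2 * (βhat j) ^ 2) := by
      rw [← Finset.sum_sub_distrib]
    linarith [h2 ▸ (hs ▸ hneg)]
  linarith
end

section
/- Grouping effect for the SCAD_L2 penalty: Let n, p ≥ 1, let F : ℝ^n → ℝ be an arbitrary function, let λ2 > 1/(2(a−1)), and let X be an n×p real matrix whose l-th and k-th columns are equal for some indices l ≠ k. If β̂ ∈ ℝ^p is a global minimizer over ℝ^p of G(β) = F(X β) + Σ_{j=1}^p ( λ1·f_SCAD(|β_j|) + λ2·β_j² ), then β̂_l = β̂_k. -/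
open intervalIntegral

/-- The SCAD function `f_SCAD(θ) = ∫₀^θ ( 1_{t ≤ λ1} + ((a·λ1 − t)₊/((a−1)·λ1))·1_{t > λ1} ) dt`. -/
noncomputable def fSCAD (a lam1 : ℝ) (θ : ℝ) : ℝ :=
  ∫ t in (0:ℝ)..θ,
    (if t ≤ lam1 then (1:ℝ) else 0) + (max (a * lam1 - t) 0 / ((a - 1) * lam1)) * (if lam1 < t then (1:ℝ) else 0)

noncomputable def scadRho (a lam1 t : ℝ) : ℝ := min 1 (max (a * lam1 - t) 0 / ((a - 1) * lam1))

noncomputable def scadPhi (a lam1 u : ℝ) : ℝ := lam1 * fSCAD a lam1 u + u ^ 2 / (2 * (a - 1))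

section aux

variable {a lam1 : ℝ} (ha : 2 < a) (hlam1 : 0 < lam1)

include ha hlam1

lemma scad_c_pos : 0 < (a - 1) * lam1 := by
  apply mul_pos (by linarith) hlam1

lemma scadRho_eq (t : ℝ) :
    (if t ≤ lam1 then (1:ℝ) else 0)
      + (max (a * lam1 - t) 0 / ((a - 1) * lam1)) * (if lam1 < t then (1:ℝ) else 0)
      = scadRho a lam1 t := by
  have hc : 0 < (a - 1) * lam1 := scad_c_pos ha hlam1
  by_cases h : t ≤ lam1
  · have h1 : (a - 1) * lam1 ≤ a * lam1 - t := by nlinarith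
    have h2 : (1:ℝ) ≤ max (a * lam1 - t) 0 / ((a - 1) * lam1) := by
      rw [le_div_iff₀ hc]
      calc (1:ℝ) * ((a - 1) * lam1) = (a - 1) * lam1 := one_mul _
        _ ≤ a * lam1 - t := h1
        _ ≤ max (a * lam1 - t) 0 := le_max_left _ _
    simp [scadRho, h, not_lt.2 h, min_eq_left h2]
  · push_neg at h
    have h1 : max (a * lam1 - t) 0 ≤ (a - 1) * lam1 := by
      apply max_le (by nlinarith) (le_of_lt hc)
    have h2 : max (a * lam1 - t) 0 / ((a - 1) * lam1) ≤ 1 := by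
      rw [div_le_one hc]; exact h1
    simp [scadRho, not_le.2 h, h, min_eq_right h2]

omit ha hlam1 in
lemma scadRho_continuous : Continuous (scadRho a lam1) := by
  unfold scadRho
  fun_prop

lemma scadRho_nonneg (t : ℝ) : 0 ≤ scadRho a lam1 t := by
  have hc : 0 < (a - 1) * lam1 := scad_c_pos ha hlam1
  exact le_min zero_le_one (div_nonneg (le_max_right _ _) hc.le)

lemma fSCAD_eq_integral :
    fSCAD a lam1 = fun θ => ∫ t in (0:ℝ)..θ, scadRho a lam1 t := by
  funext θ
  unfold fSCAD
  apply intervalIntegral.integral_congr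
  intro t _
  exact scadRho_eq ha hlam1 t

lemma fSCAD_hasDerivAt (θ : ℝ) : HasDerivAt (fSCAD a lam1) (scadRho a lam1 θ) θ := by
  rw [fSCAD_eq_integral ha hlam1]
  exact ((scadRho_continuous (a := a) (lam1 := lam1)).integral_hasStrictDerivAt 0 θ).hasDerivAt

lemma scadPhi_hasDerivAt (u : ℝ) :
    HasDerivAt (scadPhi a lam1) (lam1 * scadRho a lam1 u + u / (a - 1)) u := by
  have ha1 : (a:ℝ) - 1 ≠ 0 := by linarith
  have h1 := ((fSCAD_hasDerivAt ha hlam1 u).const_mul lam1)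
  have h2 : HasDerivAt (fun u : ℝ => u ^ 2 / (2 * (a - 1))) (u / (a - 1)) u := by
    have := (hasDerivAt_pow 2 u).div_const (2 * (a - 1))
    convert this using 1
    · rfl
    · rfl
    field_simp
    ring
  exact h1.add h2

lemma scadPhi_deriv (u : ℝ) :
    deriv (scadPhi a lam1) u = lam1 * scadRho a lam1 u + u / (a - 1) :=
  (scadPhi_hasDerivAt ha hlam1 u).deriv

lemma scadRho_of_le {t : ℝ} (h : t ≤ lam1) : scadRho a lam1 t = 1 := by
  rw [← scadRho_eq ha hlam1 t]
  simp [h, not_lt.2 h]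

lemma scadPsi_of_gt {t : ℝ} (h : lam1 < t) :
    lam1 * scadRho a lam1 t + t / (a - 1) = max (a * lam1) t / (a - 1) := by
  have hc : 0 < (a - 1) * lam1 := scad_c_pos ha hlam1
  have ha1 : (a:ℝ) - 1 ≠ 0 := by linarith
  have h1 : max (a * lam1 - t) 0 / ((a - 1) * lam1) ≤ 1 := by
    rw [div_le_one hc]
    exact max_le (by nlinarith) hc.le
  have h2 : scadRho a lam1 t = max (a * lam1 - t) 0 / ((a - 1) * lam1) :=
    min_eq_right h1
  rw [h2]
  have h3 : lam1 * (max (a * lam1 - t) 0 / ((a - 1) * lam1)) = max (a * lam1 - t) 0 / (a - 1) := by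
    field_simp
  rw [h3, ← add_div]
  congr 1
  rw [← max_add_add_right]
  simp

lemma scadPsi_mono : Monotone (fun u => lam1 * scadRho a lam1 u + u / (a - 1)) := by
  have ha1 : (0:ℝ) < a - 1 := by linarith
  intro x y hxy
  dsimp only
  rcases le_or_gt x lam1 with hx | hx
  · rcases le_or_gt y lam1 with hy | hy
    · rw [scadRho_of_le ha hlam1 hx, scadRho_of_le ha hlam1 hy]
      gcongr
    · rw [scadRho_of_le ha hlam1 hx, scadPsi_of_gt ha hlam1 hy, mul_one]
      have h0 : lam1 + x / (a - 1) = ((a - 1) * lam1 + x) / (a - 1) := by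
        field_simp
      rw [h0, div_le_div_iff₀ ha1 ha1]
      have h1 : a * lam1 ≤ max (a * lam1) y := le_max_left _ _
      nlinarith
  · have hy : lam1 < y := lt_of_lt_of_le hx hxy
    rw [scadPsi_of_gt ha hlam1 hx, scadPsi_of_gt ha hlam1 hy, div_le_div_iff₀ ha1 ha1]
    have := max_le_max (le_refl (a * lam1)) hxy
    nlinarith [le_max_left (a * lam1) x, le_max_left (a * lam1) y]

lemma scadPhi_convexOn : ConvexOn ℝ Set.univ (scadPhi a lam1) := by
  apply Monotone.convexOn_univ_of_deriv
  · exact fun u => (scadPhi_hasDerivAt ha hlam1 u).differentiableAt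
  · have : deriv (scadPhi a lam1) = fun u => lam1 * scadRho a lam1 u + u / (a - 1) := by
      funext u; exact scadPhi_deriv ha hlam1 u
    rw [this]
    exact scadPsi_mono ha hlam1

lemma scadPhi_monotoneOn : MonotoneOn (scadPhi a lam1) (Set.Ici 0) := by
  have ha1 : (0:ℝ) < a - 1 := by linarith
  apply monotoneOn_of_deriv_nonneg (convex_Ici 0)
  · exact fun u _ => ((scadPhi_hasDerivAt ha hlam1 u).differentiableAt).continuousAt.continuousWithinAt
  · exact fun u _ => ((scadPhi_hasDerivAt ha hlam1 u).differentiableAt).differentiableWithinAt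
  · intro u hu
    rw [interior_Ici] at hu
    rw [scadPhi_deriv ha hlam1 u]
    have h1 : 0 ≤ scadRho a lam1 u := scadRho_nonneg ha hlam1 u
    have h2 : 0 ≤ u / (a - 1) := div_nonneg (le_of_lt hu) ha1.le
    nlinarith

lemma scad_midpoint_strict {lam2 : ℝ} (hlam2 : 1 / (2 * (a - 1)) < lam2)
    {x y : ℝ} (hxy : x ≠ y) :
    lam1 * fSCAD a lam1 |(x + y) / 2| + lam2 * ((x + y) / 2) ^ 2
      < ((lam1 * fSCAD a lam1 |x| + lam2 * x ^ 2) + (lam1 * fSCAD a lam1 |y| + lam2 * y ^ 2)) / 2 := by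
  have ha1 : (0:ℝ) < a - 1 := by linarith
  set ε := lam2 - 1 / (2 * (a - 1)) with hε
  have hεpos : 0 < ε := by rw [hε]; exact sub_pos.2 hlam2
  have hg : ∀ θ : ℝ, lam1 * fSCAD a lam1 |θ| + lam2 * θ ^ 2 = scadPhi a lam1 |θ| + ε * θ ^ 2 := by
    intro θ
    rw [hε]
    unfold scadPhi
    rw [sq_abs]
    ring
  rw [hg, hg, hg]
  have hmono := scadPhi_monotoneOn ha hlam1
  have h1 : scadPhi a lam1 |(x + y) / 2| ≤ scadPhi a lam1 ((|x| + |y|) / 2) := by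
    apply hmono (Set.mem_Ici.2 (abs_nonneg _))
      (Set.mem_Ici.2 (by positivity))
    calc |(x + y) / 2| = |x + y| / 2 := by rw [abs_div]; norm_num
      _ ≤ (|x| + |y|) / 2 := by gcongr; exact abs_add_le x y
  have h2 : scadPhi a lam1 ((|x| + |y|) / 2)
      ≤ (scadPhi a lam1 |x| + scadPhi a lam1 |y|) / 2 := by
    have := (scadPhi_convexOn ha hlam1).2 (Set.mem_univ |x|) (Set.mem_univ |y|)
      (by norm_num : (0:ℝ) ≤ 1/2) (by norm_num : (0:ℝ) ≤ 1/2) (by norm_num)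
    simp only [smul_eq_mul] at this
    calc scadPhi a lam1 ((|x| + |y|) / 2) = scadPhi a lam1 (1/2 * |x| + 1/2 * |y|) := by ring_nf
      _ ≤ 1/2 * scadPhi a lam1 |x| + 1/2 * scadPhi a lam1 |y| := this
      _ = (scadPhi a lam1 |x| + scadPhi a lam1 |y|) / 2 := by ring
  have h3 : ε * ((x + y) / 2) ^ 2 < (ε * x ^ 2 + ε * y ^ 2) / 2 := by
    have hxy' : x - y ≠ 0 := sub_ne_zero.2 hxy
    have hne : 0 < (x - y) ^ 2 := by positivity
    nlinarith
  linarith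
end aux

lemma sum_split_two {p : ℕ} {l k : Fin p} (hlk : l ≠ k) (f : Fin p → ℝ) :
    ∑ j, f j = f l + f k + ∑ j ∈ (Finset.univ.erase l).erase k, f j := by
  have hk : k ∈ Finset.univ.erase l := Finset.mem_erase.2 ⟨hlk.symm, Finset.mem_univ k⟩
  rw [← Finset.add_sum_erase _ f (Finset.mem_univ l), ← Finset.add_sum_erase _ f hk, ← add_assoc]

/-- Grouping effect for the SCAD_L2 penalty. -/
theorem grouping_effect_scad_l2
    (a lam1 : ℝ) (ha : 2 < a) (hlam1 : 0 < lam1)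
    (n p : ℕ) (hn : 1 ≤ n) (hp : 1 ≤ p)
    (F : (Fin n → ℝ) → ℝ) (lam2 : ℝ) (hlam2 : 1 / (2 * (a - 1)) < lam2)
    (X : Matrix (Fin n) (Fin p) ℝ) (l k : Fin p) (hlk : l ≠ k)
    (hcol : ∀ i : Fin n, X i l = X i k)
    (βhat : Fin p → ℝ)
    (hmin : ∀ β : Fin p → ℝ,
      F (X.mulVec βhat) + ∑ j, (lam1 * fSCAD a lam1 |βhat j| + lam2 * (βhat j) ^ 2)
        ≤ F (X.mulVec β) + ∑ j, (lam1 * fSCAD a lam1 |β j| + lam2 * (β j) ^ 2)) :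
    βhat l = βhat k := by
  by_contra hne
  set m : ℝ := (βhat l + βhat k) / 2 with hm
  set β' : Fin p → ℝ := fun j => if j = l then m else if j = k then m else βhat j with hβ'
  have hβ'l : β' l = m := by simp [hβ']
  have hβ'k : β' k = m := by simp [hβ', hlk.symm]
  have hβ'other : ∀ j, j ≠ l → j ≠ k → β' j = βhat j := by
    intro j h1 h2; simp [hβ', h1, h2]
  -- X β' = X βhat
  have hXeq : X.mulVec β' = X.mulVec βhat := by
    funext i
    simp only [Matrix.mulVec, dotProduct]
    rw [sum_split_two hlk (fun j => X i j * β' j), sum_split_two hlk (fun j => X i j * βhat j)]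
    have hrest : ∑ j ∈ (Finset.univ.erase l).erase k, X i j * β' j
        = ∑ j ∈ (Finset.univ.erase l).erase k, X i j * βhat j := by
      apply Finset.sum_congr rfl
      intro j hj
      rw [Finset.mem_erase, Finset.mem_erase] at hj
      rw [hβ'other j hj.2.1 hj.1]
    rw [hrest, hβ'l, hβ'k, hcol i, hm]
    ring
  -- penalty comparison
  set g : ℝ → ℝ := fun θ => lam1 * fSCAD a lam1 |θ| + lam2 * θ ^ 2 with hgdef
  have hkey : g m + g m < g (βhat l) + g (βhat k) := by
    have := scad_midpoint_strict ha hlam1 hlam2 hne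
    rw [hgdef]
    dsimp only
    rw [hm]
    linarith
  have hsum : ∑ j, g (β' j) < ∑ j, g (βhat j) := by
    rw [sum_split_two hlk (fun j => g (β' j)), sum_split_two hlk (fun j => g (βhat j))]
    have hrest : ∑ j ∈ (Finset.univ.erase l).erase k, g (β' j)
        = ∑ j ∈ (Finset.univ.erase l).erase k, g (βhat j) := by
      apply Finset.sum_congr rfl
      intro j hj
      rw [Finset.mem_erase, Finset.mem_erase] at hj
      rw [hβ'other j hj.2.1 hj.1]
    rw [hrest, hβ'l, hβ'k]
    linarith
  have hmin' := hmin β'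
  rw [hXeq] at hmin'
  simp only [hgdef] at hsum
  linarith
end
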